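/- Let B₁ ≠ B₂ ∈ ℂ, let P₀, P₁, P₂ ∈ ℂ be non-collinear, and let P₃ ∈ ℂ with P₃ ≠ B₁ lie on the line through B₁ and B₂. If g is a direct isometry of the plane such that |g(P k) − B₁| = |P k − B₁| for k = 0, 1, 2 and |g(P₃) − B₂| = |P₃ − B₂|, then g = id. -/

import Mathlib

open Complex

/-- If `z * conj c` is purely imaginary and `c ≠ 0`, then `z` is a real multiple of `I * c`. -/
lemma aux_re_mul_conj_zero {c z : ℂ} (hc : c ≠ 0) (h : (z * (starRingEnd ℂ) c).re = 0) :
    ∃ t : ℝ, z = t • (Complex.I * c) := by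
  have hns : Complex.normSq c ≠ 0 := (Complex.normSq_pos.mpr hc).ne'
  have hnsC : ((Complex.normSq c : ℝ) : ℂ) ≠ 0 := Complex.ofReal_ne_zero.mpr hns
  set t : ℝ := (z * (starRingEnd ℂ) c).im with htdef
  refine ⟨t / Complex.normSq c, ?_⟩
  have hw : z * (starRingEnd ℂ) c = (t : ℂ) * Complex.I := by
    apply Complex.ext <;> simp [h, htdef]
  have hcc : (starRingEnd ℂ) c * c = (Complex.normSq c : ℂ) := by
    rw [mul_comm]; exact Complex.mul_conj c
  have hz : z * ((Complex.normSq c : ℝ) : ℂ) = (t : ℂ) * Complex.I * c := by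
    calc z * ((Complex.normSq c : ℝ) : ℂ) = z * ((starRingEnd ℂ) c * c) := by rw [hcc]
      _ = (z * (starRingEnd ℂ) c) * c := by ring
      _ = (t : ℂ) * Complex.I * c := by rw [hw]
  rw [Complex.real_smul]
  push_cast
  field_simp
  linear_combination hz

/-- Degenerate 3+1 case: three non-collinear points sensed by `B₁` and a fourth point,
distinct from `B₁`, on the line through the anchors sensed by `B₂`, force the only
compatible direct isometry to be the identity. -/
theorem degenerate_three_plus_one_unique (B1 B2 : ℂ) (hB : B1 ≠ B2)
    (P0 P1 P2 : ℂ) (hnc : ¬ Collinear ℝ ({P0, P1, P2} : Set ℂ))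
    (P3 : ℂ) (hP3 : P3 ≠ B1) (hline : Collinear ℝ ({B1, B2, P3} : Set ℂ))
    (g : ℂ → ℂ) (hg : ∃ a b : ℂ, ‖a‖ = 1 ∧ g = fun z => a * z + b)
    (h0 : ‖g P0 - B1‖ = ‖P0 - B1‖)
    (h1 : ‖g P1 - B1‖ = ‖P1 - B1‖)
    (h2 : ‖g P2 - B1‖ = ‖P2 - B1‖)
    (h3 : ‖g P3 - B2‖ = ‖P3 - B2‖) :
    g = id := by
  obtain ⟨a, b, ha, rfl⟩ := hg
  set c : ℂ := a * B1 + b - B1 with hcdef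
  have hna : Complex.normSq a = 1 := by
    rw [← Complex.sq_norm, ha]; norm_num
  have ha0 : a ≠ 0 := by
    intro h; rw [h] at hna; simp at hna
  -- key consequence of each distance condition at B1
  have key : ∀ P : ℂ, ‖(fun z => a * z + b) P - B1‖ = ‖P - B1‖ →
      2 * ((a * (P - B1)) * (starRingEnd ℂ) c).re + Complex.normSq c = 0 := by
    intro P h
    have hrw : (fun z => a * z + b) P - B1 = a * (P - B1) + c := by
      simp only [hcdef]; ring
    have hsq : Complex.normSq (a * (P - B1) + c) = Complex.normSq (P - B1) := by
      rw [← Complex.sq_norm, ← Complex.sq_norm (P - B1), ← hrw, h]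
    rw [Complex.normSq_add, Complex.normSq_mul, hna, one_mul] at hsq
    linarith
  by_cases hc : c = 0
  · -- c = 0 : g is a rotation about B1; use the fourth point to force a = 1
    have hb : b = B1 - a * B1 := by
      have := hcdef; rw [hc] at this
      linear_combination -this
    obtain ⟨p₀, v, hv⟩ := (collinear_iff_exists_forall_eq_smul_vadd (k := ℝ) _).mp hline
    obtain ⟨r0, hr0⟩ := hv B1 (by simp)
    obtain ⟨r1, hr1⟩ := hv B2 (by simp)
    obtain ⟨r2, hr2⟩ := hv P3 (by simp)
    have hB2B1 : B2 - B1 = ((r1 - r0 : ℝ) : ℂ) * v := by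
      rw [hr1, hr0]
      simp only [vadd_eq_add, Complex.real_smul]
      push_cast; ring
    have hP3B1 : P3 - B1 = ((r2 - r0 : ℝ) : ℂ) * v := by
      rw [hr2, hr0]
      simp only [vadd_eq_add, Complex.real_smul]
      push_cast; ring
    have hv0 : v ≠ 0 := by
      intro h; apply hB; rw [h, mul_zero] at hB2B1
      linear_combination -hB2B1
    have hs1 : (r1 - r0 : ℝ) ≠ 0 := by
      intro h; apply hB
      rw [h] at hB2B1; push_cast at hB2B1; rw [zero_mul] at hB2B1
      linear_combination -hB2B1
    have hs2 : (r2 - r0 : ℝ) ≠ 0 := by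
      intro h; apply hP3
      rw [h] at hP3B1; push_cast at hP3B1; rw [zero_mul] at hP3B1
      linear_combination hP3B1
    -- rewrite the fourth condition
    have hlhs : (fun z => a * z + b) P3 - B2 = (a * ((r2 - r0 : ℝ) : ℂ) - ((r1 - r0 : ℝ) : ℂ)) * v := by
      have : (fun z => a * z + b) P3 - B2 = a * (P3 - B1) - (B2 - B1) := by
        simp only [hb]; ring
      rw [this, hP3B1, hB2B1]; ring
    have hrhs : P3 - B2 = (((r2 - r0 : ℝ) : ℂ) - ((r1 - r0 : ℝ) : ℂ)) * v := by
      have : P3 - B2 = (P3 - B1) - (B2 - B1) := by ring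
      rw [this, hP3B1, hB2B1]; ring
    rw [hlhs, hrhs, norm_mul, norm_mul] at h3
    have hvabs : ‖v‖ ≠ 0 := by simpa using hv0
    have habs2 : ‖a * ((r2 - r0 : ℝ) : ℂ) - ((r1 - r0 : ℝ) : ℂ)‖
        = ‖((r2 - r0 : ℝ) : ℂ) - ((r1 - r0 : ℝ) : ℂ)‖ :=
      mul_right_cancel₀ hvabs h3
    have hnsq : Complex.normSq (a * ((r2 - r0 : ℝ) : ℂ) - ((r1 - r0 : ℝ) : ℂ))
        = Complex.normSq (((r2 - r0 : ℝ) : ℂ) - ((r1 - r0 : ℝ) : ℂ)) := by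
      rw [← Complex.sq_norm, ← Complex.sq_norm, habs2]
    set s1 := (r1 - r0 : ℝ)
    set s2 := (r2 - r0 : ℝ)
    rw [Complex.normSq_sub, Complex.normSq_sub, Complex.normSq_mul] at hnsq
    simp only [Complex.normSq_ofReal, hna, one_mul] at hnsq
    have hre : (a * (s2 : ℂ) * (starRingEnd ℂ) ((s1 : ℝ) : ℂ)).re = a.re * s2 * s1 := by
      simp [Complex.mul_re, Complex.conj_ofReal]
      try ring
    have hre2 : (((s2 : ℝ) : ℂ) * (starRingEnd ℂ) ((s1 : ℝ) : ℂ)).re = s2 * s1 := by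
      simp [Complex.conj_ofReal]
    rw [hre, hre2] at hnsq
    have hare : a.re = 1 := by
      have h12 : s2 * s1 ≠ 0 := mul_ne_zero hs2 hs1
      have hmul : a.re * (s2 * s1) = 1 * (s2 * s1) := by linarith
      exact mul_right_cancel₀ h12 hmul
    have haim : a.im = 0 := by
      have := hna
      rw [Complex.normSq_apply, hare] at this
      nlinarith
    have ha1 : a = 1 := by
      apply Complex.ext <;> simp [hare, haim]
    funext z
    simp [ha1, hb]
  · -- c ≠ 0 : the three points must be collinear, contradiction
    exfalso
    apply hnc
    have k0 := key P0 h0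
    have k1 := key P1 h1
    have k2 := key P2 h2
    have d1 : ((a * (P1 - P0)) * (starRingEnd ℂ) c).re = 0 := by
      have : a * (P1 - P0) = a * (P1 - B1) - a * (P0 - B1) := by ring
      rw [this, sub_mul, Complex.sub_re]
      linarith
    have d2 : ((a * (P2 - P0)) * (starRingEnd ℂ) c).re = 0 := by
      have : a * (P2 - P0) = a * (P2 - B1) - a * (P0 - B1) := by ring
      rw [this, sub_mul, Complex.sub_re]
      linarith
    obtain ⟨t1, ht1⟩ := aux_re_mul_conj_zero hc d1
    obtain ⟨t2, ht2⟩ := aux_re_mul_conj_zero hc d2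
    rw [collinear_iff_exists_forall_eq_smul_vadd]
    refine ⟨P0, Complex.I * c / a, ?_⟩
    intro p hp
    have hdiv : ∀ (t : ℝ) (P : ℂ), a * (P - P0) = t • (Complex.I * c) →
        P = t • (Complex.I * c / a) +ᵥ P0 := by
      intro t P hP
      rw [Complex.real_smul] at hP ⊢
      have : P - P0 = (t : ℂ) * (Complex.I * c / a) := by
        field_simp
        linear_combination hP
      simp only [vadd_eq_add]
      linear_combination this
    rcases hp with rfl | rfl | rfl
    · exact ⟨0, by simp⟩
    · exact ⟨t1, hdiv t1 _ ht1⟩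
    · exact ⟨t2, hdiv t2 _ ht2⟩
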